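/- Fix ℓ > 0 and let g(x) = (x²/(2ℓ²)) exp(−x²/(2ℓ²)), so that g''(x) = ℓ^{−2} e^{−x²/(2ℓ²)} (1 + x⁴/(2ℓ⁴) − 5x²/(2ℓ²)). Set ℓ₀ := (1/2)√(2/(5+√17)) and ℓ₁ := (1/2)√(2/(5−√17)). Then: if ℓ ≤ ℓ₀, ∫_{1/2}^{∞} |g''(x)| dx ≤ (e^{−1/(8ℓ²)}/(2ℓ²))(1/(8ℓ²) − 1); if ℓ₀ < ℓ < ℓ₁, ∫_{1/2}^{∞} |g''(x)| dx ≤ (e^{−1/(8ℓ²)}/(2ℓ²))(1 − 1/(8ℓ²)) + 3/(5ℓ); and if ℓ ≥ ℓ₁, ∫_{1/2}^{∞} |g''(x)| dx ≤ (e^{−1/(8ℓ²)}/(2ℓ²))(1/(8ℓ²) − 1) + 3/(2ℓ). -/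

import Mathlib

open MeasureTheory Real
open Filter Set Topology

noncomputable section

/-- The threshold `ℓ₀ = (1/2)√(2/(5 + √17))`. -/
def ellZero : ℝ := (1/2) * Real.sqrt (2 / (5 + Real.sqrt 17))

/-- The threshold `ℓ₁ = (1/2)√(2/(5 − √17))`. -/
def ellOne : ℝ := (1/2) * Real.sqrt (2 / (5 - Real.sqrt 17))

private def gd (ℓ : ℝ) (x : ℝ) : ℝ :=
  (1 / ℓ ^ 2) * Real.exp (-x ^ 2 / (2 * ℓ ^ 2)) *
    (1 + x ^ 4 / (2 * ℓ ^ 4) - 5 * x ^ 2 / (2 * ℓ ^ 2))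

private def gp (ℓ : ℝ) (x : ℝ) : ℝ :=
  Real.exp (-x ^ 2 / (2 * ℓ ^ 2)) * (x / ℓ ^ 2 - x ^ 3 / (2 * ℓ ^ 4))

private lemma gp_hasDeriv (ℓ : ℝ) (hℓ : 0 < ℓ) (x : ℝ) :
    HasDerivAt (gp ℓ) (gd ℓ x) x := by
  have hne : ℓ ≠ 0 := hℓ.ne'
  have h1 : HasDerivAt (fun y : ℝ => -y ^ 2 / (2 * ℓ ^ 2)) (-x / ℓ ^ 2) x := by
    have := ((hasDerivAt_pow 2 x).neg).div_const (2 * ℓ ^ 2)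
    refine this.congr_deriv ?_
    simp only [Nat.cast_ofNat, Nat.add_one_sub_one, pow_one]
    field_simp
  have h2 := h1.exp
  have h3 : HasDerivAt (fun y : ℝ => y / ℓ ^ 2 - y ^ 3 / (2 * ℓ ^ 4))
      (1 / ℓ ^ 2 - 3 * x ^ 2 / (2 * ℓ ^ 4)) x := by
    have ha := (hasDerivAt_id x).div_const (ℓ ^ 2)
    have hb := (hasDerivAt_pow 3 x).div_const (2 * ℓ ^ 4)
    have := ha.sub hb
    refine this.congr_deriv ?_
    norm_num
  have := h2.mul h3
  refine this.congr_deriv ?_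
  unfold gd
  field_simp
  ring

private lemma gp_tendsto (ℓ : ℝ) (hℓ : 0 < ℓ) :
    Tendsto (gp ℓ) atTop (𝓝 0) := by
  have ha : (0:ℝ) < 1 / (2 * ℓ ^ 2) := by positivity
  have hcole : (atTop : Filter ℝ) ≤ cocompact ℝ := by
    rw [cocompact_eq_atBot_atTop]; exact le_sup_right
  have k1 := (tendsto_rpow_abs_mul_exp_neg_mul_sq_cocompact ha 1).mono_left hcole
  have k3 := (tendsto_rpow_abs_mul_exp_neg_mul_sq_cocompact ha 3).mono_left hcole
  have comb := ((k1.const_mul (1 / ℓ ^ 2)).sub (k3.const_mul (1 / (2 * ℓ ^ 4))))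
  rw [mul_zero, mul_zero, sub_zero] at comb
  refine comb.congr' ?_
  filter_upwards [eventually_ge_atTop (0:ℝ)] with x hx
  have h1 : |x| ^ (1:ℝ) = x := by rw [abs_of_nonneg hx, Real.rpow_one]
  have h3 : |x| ^ (3:ℝ) = x ^ 3 := by
    rw [abs_of_nonneg hx, show (3:ℝ) = ((3:ℕ):ℝ) by norm_num, Real.rpow_natCast]
  rw [h1, h3, show -(1 / (2 * ℓ ^ 2)) * x ^ 2 = -x ^ 2 / (2 * ℓ ^ 2) by ring]
  unfold gp
  ring

private lemma gd_integrable (ℓ : ℝ) (hℓ : 0 < ℓ) : Integrable (gd ℓ) := by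
  have ha : (0:ℝ) < 1 / (2 * ℓ ^ 2) := by positivity
  have h0 := integrable_exp_neg_mul_sq ha
  have h2 : Integrable (fun x : ℝ => x ^ (2:ℕ) * Real.exp (-(1 / (2 * ℓ ^ 2)) * x ^ 2)) := by
    have := integrable_rpow_mul_exp_neg_mul_sq ha (show (-1:ℝ) < 2 by norm_num)
    simpa using this
  have h4 : Integrable (fun x : ℝ => x ^ (4:ℕ) * Real.exp (-(1 / (2 * ℓ ^ 2)) * x ^ 2)) := by
    have := integrable_rpow_mul_exp_neg_mul_sq ha (show (-1:ℝ) < 4 by norm_num)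
    refine this.congr (Filter.Eventually.of_forall fun x => ?_)
    show x ^ (4:ℝ) * Real.exp (-(1 / (2 * ℓ ^ 2)) * x ^ 2)
      = x ^ (4:ℕ) * Real.exp (-(1 / (2 * ℓ ^ 2)) * x ^ 2)
    norm_cast
  have key := ((h0.const_mul (1 / ℓ ^ 2)).add (h4.const_mul (1 / (2 * ℓ ^ 6)))).sub
    (h2.const_mul (5 / (2 * ℓ ^ 4)))
  refine key.congr (Filter.Eventually.of_forall fun x => ?_)
  simp only [Pi.add_apply, Pi.sub_apply]
  unfold gd
  rw [show -x ^ 2 / (2 * ℓ ^ 2) = -(1 / (2 * ℓ ^ 2)) * x ^ 2 by ring]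
  field_simp

private lemma ftc_Ioc (ℓ : ℝ) (hℓ : 0 < ℓ) {a b : ℝ} (hab : a ≤ b) :
    ∫ x in Set.Ioc a b, gd ℓ x = gp ℓ b - gp ℓ a := by
  rw [← intervalIntegral.integral_of_le hab]
  exact intervalIntegral.integral_eq_sub_of_hasDerivAt (fun x _ => gp_hasDeriv ℓ hℓ x)
    (gd_integrable ℓ hℓ).intervalIntegrable

private lemma ftc_Ioi (ℓ : ℝ) (hℓ : 0 < ℓ) (a : ℝ) :
    ∫ x in Set.Ioi a, gd ℓ x = -gp ℓ a := by
  have := integral_Ioi_of_hasDerivAt_of_tendsto' (f := gp ℓ) (f' := gd ℓ) (a := a)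
    (fun x _ => gp_hasDeriv ℓ hℓ x) (gd_integrable ℓ hℓ).integrableOn (gp_tendsto ℓ hℓ)
  rw [this]; ring

private lemma sqrt17_lt : Real.sqrt 17 < 4.1232 := by
  have h := Real.sq_sqrt (show (17:ℝ) ≥ 0 by norm_num)
  have h0 := Real.sqrt_nonneg 17
  nlinarith [h, h0]

private lemma lt_sqrt17 : (4.1231:ℝ) < Real.sqrt 17 := by
  have h := Real.sq_sqrt (show (17:ℝ) ≥ 0 by norm_num)
  have h0 := Real.sqrt_nonneg 17
  nlinarith [h, h0]

private lemma gd_nonneg (ℓ x : ℝ) (hℓ : 0 < ℓ)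
    (h : 0 ≤ (x ^ 2 - ℓ ^ 2 * ((5 - Real.sqrt 17) / 2)) *
      (x ^ 2 - ℓ ^ 2 * ((5 + Real.sqrt 17) / 2))) :
    0 ≤ gd ℓ x := by
  have hs2 : Real.sqrt 17 ^ 2 = 17 := Real.sq_sqrt (by norm_num)
  have hq : 0 ≤ 2 * ℓ ^ 4 + x ^ 4 - 5 * x ^ 2 * ℓ ^ 2 := by
    nlinarith [h, hs2, sq_nonneg (ℓ ^ 2)]
  have hrw : 1 + x ^ 4 / (2 * ℓ ^ 4) - 5 * x ^ 2 / (2 * ℓ ^ 2)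
      = (2 * ℓ ^ 4 + x ^ 4 - 5 * x ^ 2 * ℓ ^ 2) / (2 * ℓ ^ 4) := by
    field_simp
  unfold gd
  rw [hrw]
  exact mul_nonneg (mul_nonneg (by positivity) (Real.exp_pos _).le)
    (div_nonneg hq (by positivity))

private lemma gd_nonpos (ℓ x : ℝ) (hℓ : 0 < ℓ)
    (h : (x ^ 2 - ℓ ^ 2 * ((5 - Real.sqrt 17) / 2)) *
      (x ^ 2 - ℓ ^ 2 * ((5 + Real.sqrt 17) / 2)) ≤ 0) :
    gd ℓ x ≤ 0 := by
  have hs2 : Real.sqrt 17 ^ 2 = 17 := Real.sq_sqrt (by norm_num)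
  have hq : 2 * ℓ ^ 4 + x ^ 4 - 5 * x ^ 2 * ℓ ^ 2 ≤ 0 := by
    nlinarith [h, hs2, sq_nonneg (ℓ ^ 2)]
  have hrw : 1 + x ^ 4 / (2 * ℓ ^ 4) - 5 * x ^ 2 / (2 * ℓ ^ 2)
      = (2 * ℓ ^ 4 + x ^ 4 - 5 * x ^ 2 * ℓ ^ 2) / (2 * ℓ ^ 4) := by
    field_simp
  unfold gd
  rw [hrw]
  exact mul_nonpos_of_nonneg_of_nonpos (mul_nonneg (by positivity) (Real.exp_pos _).le)
    (div_nonpos_of_nonpos_of_nonneg hq (by positivity))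

private lemma gp_half (ℓ : ℝ) (hℓ : 0 < ℓ) :
    gp ℓ (1/2) = Real.exp (-(1 / (8 * ℓ ^ 2))) / (2 * ℓ ^ 2) * (1 - 1 / (8 * ℓ ^ 2)) := by
  have hne : ℓ ≠ 0 := hℓ.ne'
  unfold gp
  rw [show -(1/2 : ℝ) ^ 2 / (2 * ℓ ^ 2) = -(1 / (8 * ℓ ^ 2)) by ring]
  field_simp
  ring

private lemma gp_at_root (ℓ : ℝ) (hℓ : 0 < ℓ) (c : ℝ) (hc : 0 ≤ c) :
    gp ℓ (ℓ * Real.sqrt c) = Real.exp (-(c / 2)) * (Real.sqrt c / ℓ) * (1 - c / 2) := by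
  have hne : ℓ ≠ 0 := hℓ.ne'
  unfold gp
  have h2 : (ℓ * Real.sqrt c) ^ 2 = ℓ ^ 2 * c := by rw [mul_pow, Real.sq_sqrt hc]
  have h3 : (ℓ * Real.sqrt c) ^ 3 = ℓ ^ 3 * (c * Real.sqrt c) := by
    rw [show (ℓ * Real.sqrt c) ^ 3 = (ℓ * Real.sqrt c) ^ 2 * (ℓ * Real.sqrt c) by ring, h2]
    ring
  rw [h3, show -(ℓ * Real.sqrt c) ^ 2 / (2 * ℓ ^ 2) = -(c / 2) by
    rw [h2]; field_simp]
  field_simp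

private lemma E2_le : Real.exp (-((5 + Real.sqrt 17) / 2 / 2)) ≤ 0.10567 := by
  have hs := lt_sqrt17
  have e1 := Real.exp_one_gt_d9
  have hsplit : Real.exp ((5 + Real.sqrt 17) / 2 / 2)
      = Real.exp 1 * Real.exp 1 * Real.exp ((5 + Real.sqrt 17) / 4 - 2) := by
    rw [← Real.exp_add, ← Real.exp_add]
    congr 1
    ring
  have hge := Real.add_one_le_exp ((5 + Real.sqrt 17) / 4 - 2)
  have he2 : (7.389056 : ℝ) ≤ Real.exp 1 * Real.exp 1 := by nlinarith [e1, Real.exp_pos 1]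
  have hE : (1.280775 : ℝ) ≤ Real.exp ((5 + Real.sqrt 17) / 4 - 2) := by linarith
  have hlow : (9.4636 : ℝ) ≤ Real.exp ((5 + Real.sqrt 17) / 2 / 2) := by
    rw [hsplit]
    nlinarith [he2, hE]
  rw [Real.exp_neg]
  calc (Real.exp ((5 + Real.sqrt 17) / 2 / 2))⁻¹ ≤ (9.4636 : ℝ)⁻¹ := by
        apply inv_anti₀ (by norm_num) hlow
    _ ≤ 0.10567 := by norm_num

private lemma E1_le : Real.exp (-((5 - Real.sqrt 17) / 2 / 2)) ≤ 0.82022 := by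
  have hs := sqrt17_lt
  have hge := Real.add_one_le_exp ((5 - Real.sqrt 17) / 2 / 2)
  have hlow : (1.2192 : ℝ) ≤ Real.exp ((5 - Real.sqrt 17) / 2 / 2) := by linarith
  rw [Real.exp_neg]
  calc (Real.exp ((5 - Real.sqrt 17) / 2 / 2))⁻¹ ≤ (1.2192 : ℝ)⁻¹ := by
        apply inv_anti₀ (by norm_num) hlow
    _ ≤ 0.82022 := by norm_num

private lemma r1_nonneg : 0 ≤ Real.sqrt ((5 - Real.sqrt 17) / 2) := Real.sqrt_nonneg _
private lemma r2_nonneg : 0 ≤ Real.sqrt ((5 + Real.sqrt 17) / 2) := Real.sqrt_nonneg _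

private lemma arg1_nonneg : (0:ℝ) ≤ (5 - Real.sqrt 17) / 2 := by
  have := sqrt17_lt; linarith

private lemma arg2_nonneg : (0:ℝ) ≤ (5 + Real.sqrt 17) / 2 := by
  have := Real.sqrt_nonneg 17; linarith

private lemma r1_sq : Real.sqrt ((5 - Real.sqrt 17) / 2) ^ 2 = (5 - Real.sqrt 17) / 2 :=
  Real.sq_sqrt arg1_nonneg

private lemma r2_sq : Real.sqrt ((5 + Real.sqrt 17) / 2) ^ 2 = (5 + Real.sqrt 17) / 2 :=
  Real.sq_sqrt arg2_nonneg

private lemma r1_le : Real.sqrt ((5 - Real.sqrt 17) / 2) ≤ 0.6622 := by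
  nlinarith [r1_sq, r1_nonneg, lt_sqrt17]

private lemma r2_le : Real.sqrt ((5 + Real.sqrt 17) / 2) ≤ 2.1359 := by
  nlinarith [r2_sq, r2_nonneg, sqrt17_lt]

private lemma r1_pos : 0 < Real.sqrt ((5 - Real.sqrt 17) / 2) := by
  apply Real.sqrt_pos.2
  have := sqrt17_lt; linarith

private lemma r2_pos : 0 < Real.sqrt ((5 + Real.sqrt 17) / 2) := by
  apply Real.sqrt_pos.2
  have := Real.sqrt_nonneg 17; linarith

private lemma r1_le_r2 :
    Real.sqrt ((5 - Real.sqrt 17) / 2) ≤ Real.sqrt ((5 + Real.sqrt 17) / 2) := by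
  apply Real.sqrt_le_sqrt
  have := Real.sqrt_nonneg 17; linarith

private lemma ellZero_mul : ellZero * Real.sqrt ((5 + Real.sqrt 17) / 2) = 1/2 := by
  have h5 : (0:ℝ) < 5 + Real.sqrt 17 := by positivity
  unfold ellZero
  rw [mul_assoc, ← Real.sqrt_mul (by positivity),
    show 2 / (5 + Real.sqrt 17) * ((5 + Real.sqrt 17) / 2) = 1 by field_simp,
    Real.sqrt_one, mul_one]

private lemma ellOne_mul : ellOne * Real.sqrt ((5 - Real.sqrt 17) / 2) = 1/2 := by
  have h5 : (0:ℝ) < 5 - Real.sqrt 17 := by have := sqrt17_lt; linarith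
  unfold ellOne
  rw [mul_assoc, ← Real.sqrt_mul (by positivity),
    show 2 / (5 - Real.sqrt 17) * ((5 - Real.sqrt 17) / 2) = 1 by field_simp,
    Real.sqrt_one, mul_one]

private lemma scalar_bound2 (E r c : ℝ) (hE0 : 0 < E) (hE : E ≤ 0.10567) (hr0 : 0 ≤ r)
    (hr : r ≤ 2.1359) (hc0 : 0 ≤ c) (hc : c ≤ 1.2808) : 2 * (E * r * c) ≤ 3/5 := by
  nlinarith [mul_le_mul hE hr hr0 (by norm_num : (0:ℝ) ≤ 0.10567),
    mul_nonneg hE0.le hr0, hc0, hc]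

private lemma scalar_bound3 (E r c E' r' c' : ℝ) (hE0 : 0 < E) (hE : E ≤ 0.10567)
    (hr0 : 0 ≤ r) (hr : r ≤ 2.1359) (hc0 : 0 ≤ c) (hc : c ≤ 1.2808)
    (hE0' : 0 < E') (hE' : E' ≤ 0.82022) (hr0' : 0 ≤ r') (hr' : r' ≤ 0.6622)
    (hc0' : 0 ≤ c') (hc' : c' ≤ 0.7808) :
    2 * (E' * r' * c') + 2 * (E * r * c) ≤ 3/2 := by
  nlinarith [mul_le_mul hE hr hr0 (by norm_num : (0:ℝ) ≤ 0.10567),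
    mul_nonneg hE0.le hr0, hc0, hc,
    mul_le_mul hE' hr' hr0' (by norm_num : (0:ℝ) ≤ 0.82022),
    mul_nonneg hE0'.le hr0', hc0', hc']

private lemma case1_eq (ℓ : ℝ) (hℓ : 0 < ℓ)
    (h : ℓ * Real.sqrt ((5 + Real.sqrt 17) / 2) ≤ 1/2) :
    ∫ x in Set.Ioi ((1:ℝ)/2), |gd ℓ x| = -gp ℓ (1/2) := by
  have hsign : ∀ x ∈ Set.Ioi ((1:ℝ)/2), |gd ℓ x| = gd ℓ x := by
    intro x hx
    have hx2 : ℓ ^ 2 * ((5 + Real.sqrt 17) / 2) ≤ x ^ 2 := by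
      have h0 : 0 ≤ ℓ * Real.sqrt ((5 + Real.sqrt 17) / 2) :=
        mul_nonneg hℓ.le r2_nonneg
      have hxx : ℓ * Real.sqrt ((5 + Real.sqrt 17) / 2) ≤ x := le_trans h (le_of_lt hx)
      have := pow_le_pow_left₀ h0 hxx 2
      rwa [mul_pow, r2_sq] at this
    have hs0 := Real.sqrt_nonneg 17
    apply abs_of_nonneg
    apply gd_nonneg ℓ x hℓ
    have h1 : 0 ≤ x ^ 2 - ℓ ^ 2 * ((5 + Real.sqrt 17) / 2) := by linarith
    have h2 : 0 ≤ x ^ 2 - ℓ ^ 2 * ((5 - Real.sqrt 17) / 2) := by nlinarith [sq_nonneg ℓ]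
    exact mul_nonneg h2 h1
  rw [setIntegral_congr_fun measurableSet_Ioi hsign, ftc_Ioi ℓ hℓ]

private lemma case2_eq (ℓ : ℝ) (hℓ : 0 < ℓ)
    (h1 : ℓ * Real.sqrt ((5 - Real.sqrt 17) / 2) < 1/2)
    (h2 : 1/2 < ℓ * Real.sqrt ((5 + Real.sqrt 17) / 2)) :
    ∫ x in Set.Ioi ((1:ℝ)/2), |gd ℓ x|
      = gp ℓ (1/2) - 2 * gp ℓ (ℓ * Real.sqrt ((5 + Real.sqrt 17) / 2)) := by
  have habs := (gd_integrable ℓ hℓ).abs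
  have hs0 := Real.sqrt_nonneg 17
  rw [← Set.Ioc_union_Ioi_eq_Ioi h2.le,
    setIntegral_union (Set.Ioc_disjoint_Ioi le_rfl) measurableSet_Ioi
      habs.integrableOn habs.integrableOn]
  have e1 : ∀ x ∈ Set.Ioc ((1:ℝ)/2) (ℓ * Real.sqrt ((5 + Real.sqrt 17) / 2)),
      |gd ℓ x| = -gd ℓ x := by
    intro x hx
    apply abs_of_nonpos
    apply gd_nonpos ℓ x hℓ
    have hxl : ℓ * Real.sqrt ((5 - Real.sqrt 17) / 2) < x := lt_of_lt_of_le h1 (le_of_lt hx.1)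
    have hx0 : 0 < x := lt_of_le_of_lt (by norm_num) hx.1
    have ha : ℓ ^ 2 * ((5 - Real.sqrt 17) / 2) ≤ x ^ 2 := by
      have h0 : 0 ≤ ℓ * Real.sqrt ((5 - Real.sqrt 17) / 2) := mul_nonneg hℓ.le r1_nonneg
      have := pow_le_pow_left₀ h0 hxl.le 2
      rwa [mul_pow, r1_sq] at this
    have hb : x ^ 2 ≤ ℓ ^ 2 * ((5 + Real.sqrt 17) / 2) := by
      have := pow_le_pow_left₀ hx0.le hx.2 2
      rwa [mul_pow, r2_sq] at this
    exact mul_nonpos_of_nonneg_of_nonpos (by linarith) (by linarith)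
  have e2 : ∀ x ∈ Set.Ioi (ℓ * Real.sqrt ((5 + Real.sqrt 17) / 2)), |gd ℓ x| = gd ℓ x := by
    intro x hx
    apply abs_of_nonneg
    apply gd_nonneg ℓ x hℓ
    have h0 : 0 ≤ ℓ * Real.sqrt ((5 + Real.sqrt 17) / 2) := mul_nonneg hℓ.le r2_nonneg
    have ha : ℓ ^ 2 * ((5 + Real.sqrt 17) / 2) ≤ x ^ 2 := by
      have := pow_le_pow_left₀ h0 (le_of_lt hx) 2
      rwa [mul_pow, r2_sq] at this
    have hb : 0 ≤ x ^ 2 - ℓ ^ 2 * ((5 - Real.sqrt 17) / 2) := by nlinarith [sq_nonneg ℓ]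
    exact mul_nonneg hb (by linarith)
  rw [setIntegral_congr_fun measurableSet_Ioc e1, setIntegral_congr_fun measurableSet_Ioi e2,
    integral_neg, ftc_Ioc ℓ hℓ h2.le, ftc_Ioi ℓ hℓ]
  ring

private lemma case3_eq (ℓ : ℝ) (hℓ : 0 < ℓ)
    (h1 : 1/2 ≤ ℓ * Real.sqrt ((5 - Real.sqrt 17) / 2)) :
    ∫ x in Set.Ioi ((1:ℝ)/2), |gd ℓ x|
      = 2 * gp ℓ (ℓ * Real.sqrt ((5 - Real.sqrt 17) / 2))
        - 2 * gp ℓ (ℓ * Real.sqrt ((5 + Real.sqrt 17) / 2)) - gp ℓ (1/2) := by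
  have habs := (gd_integrable ℓ hℓ).abs
  have hs0 := Real.sqrt_nonneg 17
  have h12 : ℓ * Real.sqrt ((5 - Real.sqrt 17) / 2) ≤ ℓ * Real.sqrt ((5 + Real.sqrt 17) / 2) :=
    mul_le_mul_of_nonneg_left r1_le_r2 hℓ.le
  rw [← Set.Ioc_union_Ioi_eq_Ioi h1,
    setIntegral_union (Set.Ioc_disjoint_Ioi le_rfl) measurableSet_Ioi
      habs.integrableOn habs.integrableOn,
    ← Set.Ioc_union_Ioi_eq_Ioi h12,
    setIntegral_union (Set.Ioc_disjoint_Ioi le_rfl) measurableSet_Ioi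
      habs.integrableOn habs.integrableOn]
  have e0 : ∀ x ∈ Set.Ioc ((1:ℝ)/2) (ℓ * Real.sqrt ((5 - Real.sqrt 17) / 2)),
      |gd ℓ x| = gd ℓ x := by
    intro x hx
    apply abs_of_nonneg
    apply gd_nonneg ℓ x hℓ
    have hx0 : 0 < x := lt_of_le_of_lt (by norm_num) hx.1
    have ha : x ^ 2 ≤ ℓ ^ 2 * ((5 - Real.sqrt 17) / 2) := by
      have := pow_le_pow_left₀ hx0.le hx.2 2
      rwa [mul_pow, r1_sq] at this
    have hb : x ^ 2 ≤ ℓ ^ 2 * ((5 + Real.sqrt 17) / 2) := by nlinarith [sq_nonneg ℓ]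
    have hA : x ^ 2 - ℓ ^ 2 * ((5 - Real.sqrt 17) / 2) ≤ 0 := by linarith
    have hB : x ^ 2 - ℓ ^ 2 * ((5 + Real.sqrt 17) / 2) ≤ 0 := by linarith
    nlinarith [mul_nonneg (neg_nonneg.2 hA) (neg_nonneg.2 hB)]
  have e1 : ∀ x ∈ Set.Ioc (ℓ * Real.sqrt ((5 - Real.sqrt 17) / 2))
      (ℓ * Real.sqrt ((5 + Real.sqrt 17) / 2)), |gd ℓ x| = -gd ℓ x := by
    intro x hx
    apply abs_of_nonpos
    apply gd_nonpos ℓ x hℓ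
    have h0 : 0 ≤ ℓ * Real.sqrt ((5 - Real.sqrt 17) / 2) := mul_nonneg hℓ.le r1_nonneg
    have hx0 : 0 ≤ x := le_trans h0 hx.1.le
    have ha : ℓ ^ 2 * ((5 - Real.sqrt 17) / 2) ≤ x ^ 2 := by
      have := pow_le_pow_left₀ h0 hx.1.le 2
      rwa [mul_pow, r1_sq] at this
    have hb : x ^ 2 ≤ ℓ ^ 2 * ((5 + Real.sqrt 17) / 2) := by
      have := pow_le_pow_left₀ hx0 hx.2 2
      rwa [mul_pow, r2_sq] at this
    exact mul_nonpos_of_nonneg_of_nonpos (by linarith) (by linarith)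
  have e2 : ∀ x ∈ Set.Ioi (ℓ * Real.sqrt ((5 + Real.sqrt 17) / 2)), |gd ℓ x| = gd ℓ x := by
    intro x hx
    apply abs_of_nonneg
    apply gd_nonneg ℓ x hℓ
    have h0 : 0 ≤ ℓ * Real.sqrt ((5 + Real.sqrt 17) / 2) := mul_nonneg hℓ.le r2_nonneg
    have ha : ℓ ^ 2 * ((5 + Real.sqrt 17) / 2) ≤ x ^ 2 := by
      have := pow_le_pow_left₀ h0 (le_of_lt hx) 2
      rwa [mul_pow, r2_sq] at this
    have hb : 0 ≤ x ^ 2 - ℓ ^ 2 * ((5 - Real.sqrt 17) / 2) := by nlinarith [sq_nonneg ℓ]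
    exact mul_nonneg hb (by linarith)
  rw [setIntegral_congr_fun measurableSet_Ioc e0, setIntegral_congr_fun measurableSet_Ioc e1,
    setIntegral_congr_fun measurableSet_Ioi e2, integral_neg, ftc_Ioc ℓ hℓ h1,
    ftc_Ioc ℓ hℓ h12, ftc_Ioi ℓ hℓ]
  ring

private lemma boundB2 (ℓ : ℝ) (hℓ : 0 < ℓ) :
    -(2 * gp ℓ (ℓ * Real.sqrt ((5 + Real.sqrt 17) / 2))) ≤ 3 / (5 * ℓ) := by
  rw [gp_at_root ℓ hℓ _ arg2_nonneg]
  have key := scalar_bound2 (Real.exp (-((5 + Real.sqrt 17) / 2 / 2)))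
    (Real.sqrt ((5 + Real.sqrt 17) / 2)) ((5 + Real.sqrt 17) / 2 / 2 - 1)
    (Real.exp_pos _) E2_le r2_nonneg r2_le
    (by have := lt_sqrt17; linarith) (by have := sqrt17_lt; linarith)
  rw [show -(2 * (Real.exp (-((5 + Real.sqrt 17) / 2 / 2)) *
      (Real.sqrt ((5 + Real.sqrt 17) / 2) / ℓ) * (1 - (5 + Real.sqrt 17) / 2 / 2)))
      = (2 * (Real.exp (-((5 + Real.sqrt 17) / 2 / 2)) * Real.sqrt ((5 + Real.sqrt 17) / 2) *
        ((5 + Real.sqrt 17) / 2 / 2 - 1))) / ℓ by ring,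
    show (3:ℝ) / (5 * ℓ) = (3/5) / ℓ by ring]
  gcongr

private lemma boundB3 (ℓ : ℝ) (hℓ : 0 < ℓ) :
    2 * gp ℓ (ℓ * Real.sqrt ((5 - Real.sqrt 17) / 2))
      - 2 * gp ℓ (ℓ * Real.sqrt ((5 + Real.sqrt 17) / 2)) ≤ 3 / (2 * ℓ) := by
  rw [gp_at_root ℓ hℓ _ arg1_nonneg, gp_at_root ℓ hℓ _ arg2_nonneg]
  have key := scalar_bound3 (Real.exp (-((5 + Real.sqrt 17) / 2 / 2)))
    (Real.sqrt ((5 + Real.sqrt 17) / 2)) ((5 + Real.sqrt 17) / 2 / 2 - 1)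
    (Real.exp (-((5 - Real.sqrt 17) / 2 / 2)))
    (Real.sqrt ((5 - Real.sqrt 17) / 2)) (1 - (5 - Real.sqrt 17) / 2 / 2)
    (Real.exp_pos _) E2_le r2_nonneg r2_le
    (by have := lt_sqrt17; linarith) (by have := sqrt17_lt; linarith)
    (Real.exp_pos _) E1_le r1_nonneg r1_le
    (by have := lt_sqrt17; linarith) (by have := sqrt17_lt; linarith)
  rw [show 2 * (Real.exp (-((5 - Real.sqrt 17) / 2 / 2)) *
      (Real.sqrt ((5 - Real.sqrt 17) / 2) / ℓ) * (1 - (5 - Real.sqrt 17) / 2 / 2))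
      - 2 * (Real.exp (-((5 + Real.sqrt 17) / 2 / 2)) *
      (Real.sqrt ((5 + Real.sqrt 17) / 2) / ℓ) * (1 - (5 + Real.sqrt 17) / 2 / 2))
      = (2 * (Real.exp (-((5 - Real.sqrt 17) / 2 / 2)) * Real.sqrt ((5 - Real.sqrt 17) / 2) *
          (1 - (5 - Real.sqrt 17) / 2 / 2))
        + 2 * (Real.exp (-((5 + Real.sqrt 17) / 2 / 2)) * Real.sqrt ((5 + Real.sqrt 17) / 2) *
          ((5 + Real.sqrt 17) / 2 / 2 - 1))) / ℓ by ring,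
    show (3:ℝ) / (2 * ℓ) = (3/2) / ℓ by ring]
  gcongr

/-- Estimates on `∫_{1/2}^{∞} |g''(x)| dx` for `g(x) = (x²/(2ℓ²)) e^{−x²/(2ℓ²)}`, with
`g''(x) = ℓ^{−2} e^{−x²/(2ℓ²)} (1 + x⁴/(2ℓ⁴) − 5x²/(2ℓ²))`. -/
theorem derGauss_second_derivative_tail_integral (ℓ : ℝ) (hℓ : 0 < ℓ) :
    (ℓ ≤ ellZero →
      (∫ x in Set.Ioi ((1:ℝ)/2),
          |(1 / ℓ ^ 2) * Real.exp (-x ^ 2 / (2 * ℓ ^ 2)) *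
            (1 + x ^ 4 / (2 * ℓ ^ 4) - 5 * x ^ 2 / (2 * ℓ ^ 2))|) ≤
        (Real.exp (-(1 / (8 * ℓ ^ 2))) / (2 * ℓ ^ 2)) * (1 / (8 * ℓ ^ 2) - 1)) ∧
    (ellZero < ℓ → ℓ < ellOne →
      (∫ x in Set.Ioi ((1:ℝ)/2),
          |(1 / ℓ ^ 2) * Real.exp (-x ^ 2 / (2 * ℓ ^ 2)) *
            (1 + x ^ 4 / (2 * ℓ ^ 4) - 5 * x ^ 2 / (2 * ℓ ^ 2))|) ≤
        (Real.exp (-(1 / (8 * ℓ ^ 2))) / (2 * ℓ ^ 2)) * (1 - 1 / (8 * ℓ ^ 2)) + 3 / (5 * ℓ)) ∧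
    (ellOne ≤ ℓ →
      (∫ x in Set.Ioi ((1:ℝ)/2),
          |(1 / ℓ ^ 2) * Real.exp (-x ^ 2 / (2 * ℓ ^ 2)) *
            (1 + x ^ 4 / (2 * ℓ ^ 4) - 5 * x ^ 2 / (2 * ℓ ^ 2))|) ≤
        (Real.exp (-(1 / (8 * ℓ ^ 2))) / (2 * ℓ ^ 2)) * (1 / (8 * ℓ ^ 2) - 1) + 3 / (2 * ℓ)) := by
  refine ⟨?_, ?_, ?_⟩
  · intro h
    have hx2 : ℓ * Real.sqrt ((5 + Real.sqrt 17) / 2) ≤ 1/2 := by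
      have := mul_le_mul_of_nonneg_right h r2_nonneg
      rwa [ellZero_mul] at this
    show (∫ x in Set.Ioi ((1:ℝ)/2), |gd ℓ x|) ≤ _
    rw [case1_eq ℓ hℓ hx2, gp_half ℓ hℓ]
    exact le_of_eq (by ring)
  · intro h0 h1
    have ha : 1/2 < ℓ * Real.sqrt ((5 + Real.sqrt 17) / 2) := by
      have := mul_lt_mul_of_pos_right h0 r2_pos
      rwa [ellZero_mul] at this
    have hb : ℓ * Real.sqrt ((5 - Real.sqrt 17) / 2) < 1/2 := by
      have := mul_lt_mul_of_pos_right h1 r1_pos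
      rwa [ellOne_mul] at this
    show (∫ x in Set.Ioi ((1:ℝ)/2), |gd ℓ x|) ≤ _
    rw [case2_eq ℓ hℓ hb ha, gp_half ℓ hℓ]
    have := boundB2 ℓ hℓ
    linarith
  · intro h
    have ha : 1/2 ≤ ℓ * Real.sqrt ((5 - Real.sqrt 17) / 2) := by
      have := mul_le_mul_of_nonneg_right h r1_nonneg
      rwa [ellOne_mul] at this
    show (∫ x in Set.Ioi ((1:ℝ)/2), |gd ℓ x|) ≤ _
    rw [case3_eq ℓ hℓ ha, gp_half ℓ hℓ]
    have := boundB3 ℓ hℓ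
    linarith
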